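/- Let (S_l) be simple random walk on the complete graph C_n started at vertex 1 with range R_m. Fix ε ∈ (0,1) and θ > 0. Then for m with m(1−ε)e^θ < n−1, P(R_m ≤ m(1−ε)) ≤ e^{−θ m ε} / (1 − m e^θ (1−ε)/(n−1))^{m(1−ε)}. -/

import Mathlib

open Finset

attribute [local instance] Classical.propDecidable

/-- extend a Fin-function by zero -/
def extz (m : ℕ) (g : Fin m → ℕ) : ℕ → ℕ := fun i => if h : i < m then g ⟨i, h⟩ else 0

def prevI (m : ℕ) (g : Fin m → ℕ) (i : ℕ) : Finset ℕ := (Finset.range i).image (extz m g)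

def newsF (m : ℕ) (g : Fin m → ℕ) : Finset ℕ :=
  (Finset.Ico 1 m).filter fun i => extz m g i ∉ prevI m g i

def codeF (m k : ℕ) (g : Fin m → ℕ) : Fin m → ℕ := fun i =>
  if i.val ∈ newsF m g then extz m g i.val - 1
  else (((prevI m g i.val).erase (extz m g (i.val - 1))).filter (· < extz m g i.val)).card

/-- rank determines the element -/
lemma rank_inj (s : Finset ℕ) {a b : ℕ} (ha : a ∈ s) (hb : b ∈ s)
    (h : (s.filter (· < a)).card = (s.filter (· < b)).card) : a = b := by
  by_contra hne
  rcases Nat.lt_or_ge a b with hab | hab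
  · have hss : s.filter (· < a) ⊂ s.filter (· < b) := by
      constructor
      · intro x hx; simp only [Finset.mem_filter] at hx ⊢; exact ⟨hx.1, by omega⟩
      · intro hsub
        have : a ∈ s.filter (· < a) := hsub (by simp [Finset.mem_filter, ha, hab])
        simp [Finset.mem_filter] at this
    exact absurd h (Nat.ne_of_lt (Finset.card_lt_card hss))
  · have hba : b < a := by omega
    have hss : s.filter (· < b) ⊂ s.filter (· < a) := by
      constructor
      · intro x hx; simp only [Finset.mem_filter] at hx ⊢; exact ⟨hx.1, by omega⟩
      · intro hsub
        have : b ∈ s.filter (· < b) := hsub (by simp [Finset.mem_filter, hb, hba])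
        simp [Finset.mem_filter] at this
    exact absurd h.symm (Nat.ne_of_lt (Finset.card_lt_card hss))

lemma extz_lt (m : ℕ) (g : Fin m → ℕ) (v : ℕ) (h : v < m) : extz m g v = g ⟨v, h⟩ :=
  dif_pos h

lemma im_eq (m : ℕ) (g : Fin m → ℕ) :
    (Finset.range m).image (extz m g) = Finset.image g Finset.univ := by
  ext x
  simp only [Finset.mem_image, Finset.mem_range, Finset.mem_univ, true_and]
  constructor
  · rintro ⟨i, hi, rfl⟩; exact ⟨⟨i, hi⟩, (extz_lt m g i hi).symm⟩
  · rintro ⟨i, rfl⟩; exact ⟨i.val, i.isLt, extz_lt m g i.val i.isLt⟩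

/-- validity predicate -/
def validP (m n : ℕ) (g : Fin m → ℕ) : Prop :=
  extz m g 0 = 0 ∧ (∀ i < m, extz m g i < n) ∧
    (∀ i, i + 1 < m → extz m g (i + 1) ≠ extz m g i)

lemma news_subset (m : ℕ) (g : Fin m → ℕ) : newsF m g ⊆ Finset.Ico 1 m :=
  Finset.filter_subset _ _

lemma mem_news (m : ℕ) (g : Fin m → ℕ) (i : ℕ) :
    i ∈ newsF m g ↔ (1 ≤ i ∧ i < m) ∧ extz m g i ∉ prevI m g i := by
  simp [newsF, Finset.mem_filter, Finset.mem_Ico, and_assoc]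

lemma zero_mem_prev (m n : ℕ) (g : Fin m → ℕ) (hv : validP m n g) {i : ℕ} (hi : 1 ≤ i) :
    0 ∈ prevI m g i := by
  have : extz m g 0 = 0 := hv.1
  exact Finset.mem_image.2 ⟨0, Finset.mem_range.2 (by omega), this⟩

lemma news_pos (m n : ℕ) (g : Fin m → ℕ) (hv : validP m n g) {i : ℕ} (hi : i ∈ newsF m g) :
    1 ≤ extz m g i := by
  rw [mem_news] at hi
  rcases Nat.eq_zero_or_pos (extz m g i) with h0 | h1
  · exact absurd (h0 ▸ zero_mem_prev m n g hv hi.1.1) hi.2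
  · exact h1

lemma news_card_le (m n k : ℕ) (g : Fin m → ℕ) (hm : 1 ≤ m) (hv : validP m n g)
    (hb : (Finset.image g Finset.univ).card ≤ k) : (newsF m g).card + 1 ≤ k := by
  classical
  have hinj : Set.InjOn (extz m g) (newsF m g) := by
    intro i hi j hj hij
    by_contra hne
    rw [Finset.mem_coe] at hi hj
    rcases Nat.lt_or_ge i j with h | h
    · rw [mem_news] at hj
      exact hj.2 (Finset.mem_image.2 ⟨i, Finset.mem_range.2 h, hij⟩)
    · have h' : j < i := by omega
      rw [mem_news] at hi
      exact hi.2 (Finset.mem_image.2 ⟨j, Finset.mem_range.2 h', hij.symm⟩)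
  have hcard : (newsF m g).card = ((newsF m g).image (extz m g)).card :=
    (Finset.card_image_of_injOn hinj).symm
  have hsub : (newsF m g).image (extz m g) ⊆ ((Finset.range m).image (extz m g)).erase 0 := by
    intro x hx
    rcases Finset.mem_image.1 hx with ⟨i, hi, rfl⟩
    refine Finset.mem_erase.2 ⟨?_, ?_⟩
    · have := news_pos m n g hv hi; omega
    · rw [mem_news] at hi
      exact Finset.mem_image.2 ⟨i, Finset.mem_range.2 hi.1.2, rfl⟩
  have h0 : 0 ∈ (Finset.range m).image (extz m g) :=
    Finset.mem_image.2 ⟨0, Finset.mem_range.2 (by omega), hv.1⟩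
  have h1 := Finset.card_le_card hsub
  rw [Finset.card_erase_of_mem h0, im_eq] at h1
  have h2 : 1 ≤ (Finset.image g Finset.univ).card := by
    rw [← im_eq m g]
    exact Finset.card_pos.2 ⟨0, h0⟩
  omega

lemma code_mem (m n k : ℕ) (g : Fin m → ℕ) (hv : validP m n g)
    (hb : (Finset.image g Finset.univ).card ≤ k) (i : Fin m) :
    codeF m k g i ∈ Finset.range
      (if i.val ∈ newsF m g then n - 1 else if i.val = 0 then 1 else k - 1) := by
  classical
  rw [Finset.mem_range]
  by_cases hi : i.val ∈ newsF m g
  · rw [if_pos hi]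
    unfold codeF
    rw [if_pos hi]
    have h1 : 1 ≤ extz m g i.val := news_pos m n g hv hi
    have h2 : extz m g i.val < n := hv.2.1 i.val i.isLt
    omega
  · rw [if_neg hi]
    unfold codeF
    rw [if_neg hi]
    by_cases h0 : i.val = 0
    · rw [if_pos h0, h0]
      have : prevI m g 0 = ∅ := by simp [prevI]
      simp [this]
    · rw [if_neg h0]
      -- old step: rank < k - 1
      have hio : i.val ∈ Finset.Ico 1 m := Finset.mem_Ico.2 ⟨by omega, i.isLt⟩
      have hmem : extz m g i.val ∈ prevI m g i.val := by
        by_contra hc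
        exact hi (Finset.mem_filter.2 ⟨hio, hc⟩)
      have hne : extz m g i.val ≠ extz m g (i.val - 1) := by
        have := hv.2.2 (i.val - 1) (by omega)
        have he : i.val - 1 + 1 = i.val := by omega
        rw [he] at this
        exact this
      set s0 := (prevI m g i.val).erase (extz m g (i.val - 1)) with hs0
      have hfi : extz m g i.val ∈ s0 := Finset.mem_erase.2 ⟨hne, hmem⟩
      have hrank : (s0.filter (· < extz m g i.val)).card + 1 ≤ s0.card := by
        have hsub : s0.filter (· < extz m g i.val) ⊆ s0.erase (extz m g i.val) := by
          intro x hx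
          rw [Finset.mem_filter] at hx
          exact Finset.mem_erase.2 ⟨by omega, hx.1⟩
        have := Finset.card_le_card hsub
        rw [Finset.card_erase_of_mem hfi] at this
        have : 1 ≤ s0.card := Finset.card_pos.2 ⟨_, hfi⟩
        have := Finset.card_le_card hsub
        rw [Finset.card_erase_of_mem hfi] at this
        omega
      have hprev_mem : extz m g (i.val - 1) ∈ prevI m g i.val :=
        Finset.mem_image.2 ⟨i.val - 1, Finset.mem_range.2 (by omega), rfl⟩
      have hs0card : s0.card + 1 = (prevI m g i.val).card := by
        rw [hs0, Finset.card_erase_of_mem hprev_mem]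
        have : 1 ≤ (prevI m g i.val).card := Finset.card_pos.2 ⟨_, hprev_mem⟩
        omega
      have hprevk : (prevI m g i.val).card ≤ k := by
        have hsub : prevI m g i.val ⊆ (Finset.range m).image (extz m g) :=
          Finset.image_subset_image (Finset.range_subset_range.2 (le_of_lt i.isLt))
        have := Finset.card_le_card hsub
        rw [im_eq] at this
        omega
      omega

lemma encode_inj (m n k : ℕ) (g g' : Fin m → ℕ) (hv : validP m n g) (hv' : validP m n g')
    (hnw : newsF m g = newsF m g') (hcd : codeF m k g = codeF m k g') : g = g' := by
  classical
  have key : ∀ v, ∀ h : v < m, g ⟨v, h⟩ = g' ⟨v, h⟩ := by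
    intro v
    induction v using Nat.strong_induction_on with
    | _ v IH =>
      intro hvm
      have hext : ∀ w < v, extz m g w = extz m g' w := by
        intro w hw
        have hwm : w < m := by omega
        rw [extz_lt m g w hwm, extz_lt m g' w hwm]
        exact IH w hw hwm
      have hprev : prevI m g v = prevI m g' v := by
        unfold prevI
        apply Finset.image_congr
        intro x hx
        rw [Finset.mem_coe, Finset.mem_range] at hx
        exact hext x hx
      rcases Nat.eq_zero_or_pos v with h0 | h1
      · subst h0
        have e1 : extz m g 0 = g ⟨0, hvm⟩ := extz_lt m g 0 hvm
        have e2 : extz m g' 0 = g' ⟨0, hvm⟩ := extz_lt m g' 0 hvm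
        rw [← e1, ← e2, hv.1, hv'.1]
      · have hcdv := congrFun hcd ⟨v, hvm⟩
        by_cases hnv : v ∈ newsF m g
        · have hnv' : v ∈ newsF m g' := hnw ▸ hnv
          unfold codeF at hcdv
          simp only [hnv, hnv', if_pos] at hcdv
          have p1 : 1 ≤ extz m g v := news_pos m n g hv hnv
          have p2 : 1 ≤ extz m g' v := news_pos m n g' hv' hnv'
          have : extz m g v = extz m g' v := by omega
          rw [extz_lt m g v hvm, extz_lt m g' v hvm] at this
          exact this
        · have hnv' : v ∉ newsF m g' := hnw ▸ hnv
          have hio : v ∈ Finset.Ico 1 m := Finset.mem_Ico.2 ⟨h1, hvm⟩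
          have hmem : extz m g v ∈ prevI m g v := by
            by_contra hc; exact hnv (Finset.mem_filter.2 ⟨hio, hc⟩)
          have hmem' : extz m g' v ∈ prevI m g v := by
            rw [hprev]
            by_contra hc; exact hnv' (Finset.mem_filter.2 ⟨hio, hc⟩)
          have hne1 : extz m g v ≠ extz m g (v - 1) := by
            have := hv.2.2 (v - 1) (by omega)
            have he : v - 1 + 1 = v := by omega
            rw [he] at this; exact this
          have hne2 : extz m g' v ≠ extz m g (v - 1) := by
            have := hv'.2.2 (v - 1) (by omega)
            have he : v - 1 + 1 = v := by omega
            rw [he] at this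
            rw [← hext (v - 1) (by omega)] at this
            exact this
          set s0 := (prevI m g v).erase (extz m g (v - 1)) with hs0
          have hm1 : extz m g v ∈ s0 := Finset.mem_erase.2 ⟨hne1, hmem⟩
          have hm2 : extz m g' v ∈ s0 := Finset.mem_erase.2 ⟨hne2, hmem'⟩
          unfold codeF at hcdv
          simp only [hnv, hnv', if_neg, if_false] at hcdv
          rw [← hprev, ← hext (v - 1) (by omega)] at hcdv
          have := rank_inj s0 hm1 hm2 hcdv
          rw [extz_lt m g v hvm, extz_lt m g' v hvm] at this
          exact this
  funext i
  have := key i.val i.isLt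
  simpa using this

lemma fiber_bound (m n k j : ℕ) (hm : 1 ≤ m) :
    (((Fintype.piFinset fun _ : Fin m => Finset.range n).filter
      (fun g => validP m n g ∧ (Finset.image g Finset.univ).card ≤ k)).filter
      (fun g => (newsF m g).card = j)).card ≤
    (m - 1).choose j * ((n - 1) ^ j * (k - 1) ^ (m - 1 - j)) := by
  classical
  set TS : Finset ((_ : Finset ℕ) × (Fin m → ℕ)) :=
    ((Finset.Ico 1 m).powersetCard j).sigma
      (fun s => Fintype.piFinset fun i : Fin m =>
        Finset.range (if i.val ∈ s then n - 1 else if i.val = 0 then 1 else k - 1)) with hTS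
  have hmaps : ∀ g ∈ ((Fintype.piFinset fun _ : Fin m => Finset.range n).filter
      (fun g => validP m n g ∧ (Finset.image g Finset.univ).card ≤ k)).filter
      (fun g => (newsF m g).card = j),
      (⟨newsF m g, codeF m k g⟩ : (_ : Finset ℕ) × (Fin m → ℕ)) ∈ TS := by
    intro g hg
    rw [Finset.mem_filter] at hg
    obtain ⟨hg1, hcardj⟩ := hg
    rw [Finset.mem_filter] at hg1
    obtain ⟨_, hv, hb⟩ := hg1
    rw [hTS, Finset.mem_sigma]
    constructor
    · exact Finset.mem_powersetCard.2 ⟨news_subset m g, hcardj⟩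
    · rw [Fintype.mem_piFinset]
      intro i
      exact code_mem m n k g hv hb i
  have hinj : Set.InjOn (fun g => (⟨newsF m g, codeF m k g⟩ : (_ : Finset ℕ) × (Fin m → ℕ)))
      (((Fintype.piFinset fun _ : Fin m => Finset.range n).filter
      (fun g => validP m n g ∧ (Finset.image g Finset.univ).card ≤ k)).filter
      (fun g => (newsF m g).card = j)) := by
    intro g hg g' hg' heq
    rw [Finset.mem_coe, Finset.mem_filter, Finset.mem_filter] at hg hg'
    have h1 := (Sigma.mk.inj_iff.1 heq).1
    have h2 : codeF m k g = codeF m k g' := eq_of_heq (Sigma.mk.inj_iff.1 heq).2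
    exact encode_inj m n k g g' hg.1.2.1 hg'.1.2.1 h1 h2
  have hcard := Finset.card_le_card_of_injOn _ hmaps hinj
  refine le_trans hcard ?_
  rw [hTS, Finset.card_sigma]
  have hconst : ∀ s ∈ (Finset.Ico 1 m).powersetCard j,
      (Fintype.piFinset fun i : Fin m =>
        Finset.range (if i.val ∈ s then n - 1 else if i.val = 0 then 1 else k - 1)).card
      = (n - 1) ^ j * (k - 1) ^ (m - 1 - j) := by
    intro s hs
    rw [Finset.mem_powersetCard] at hs
    obtain ⟨hsub, hcard⟩ := hs
    rw [Fintype.card_piFinset]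
    simp only [Finset.card_range]
    rw [Fin.prod_univ_eq_prod_range
      (fun i => if i ∈ s then n - 1 else if i = 0 then 1 else k - 1) m]
    have hsplit : Finset.range m = insert 0 (Finset.Ico 1 m) := by
      ext x; simp only [Finset.mem_range, Finset.mem_insert, Finset.mem_Ico]; omega
    rw [hsplit, Finset.prod_insert (by simp)]
    have h0s : 0 ∉ s := fun h => by simpa using Finset.mem_Ico.1 (hsub h)
    rw [if_neg h0s, if_pos rfl, one_mul]
    rw [← Finset.prod_sdiff hsub]
    have e1 : ∏ i ∈ s, (if i ∈ s then n - 1 else if i = 0 then 1 else k - 1) = (n - 1) ^ j := by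
      rw [Finset.prod_congr rfl (fun i hi => if_pos hi), Finset.prod_const, hcard]
    have e2 : ∏ i ∈ Finset.Ico 1 m \ s,
        (if i ∈ s then n - 1 else if i = 0 then 1 else k - 1) = (k - 1) ^ (m - 1 - j) := by
      rw [Finset.prod_congr rfl (fun i hi => ?_), Finset.prod_const, Finset.card_sdiff_of_subset hsub,
        Nat.card_Ico, hcard]
      rw [Finset.mem_sdiff, Finset.mem_Ico] at hi
      rw [if_neg hi.2, if_neg (by omega)]
    rw [e1, e2, mul_comm]
  rw [Finset.sum_congr rfl hconst, Finset.sum_const, Finset.card_powersetCard, Nat.card_Ico,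
    smul_eq_mul]

lemma count_bound (m n k : ℕ) (hm : 1 ≤ m) (hk : 1 ≤ k) :
    ((Fintype.piFinset fun _ : Fin m => Finset.range n).filter
      (fun g => validP m n g ∧ (Finset.image g Finset.univ).card ≤ k)).card ≤
    ∑ j ∈ Finset.range k, (m - 1).choose j * ((n - 1) ^ j * (k - 1) ^ (m - 1 - j)) := by
  classical
  set B := (Fintype.piFinset fun _ : Fin m => Finset.range n).filter
      (fun g => validP m n g ∧ (Finset.image g Finset.univ).card ≤ k) with hB
  have hmem : ∀ g ∈ B, (newsF m g).card ∈ Finset.range k := by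
    intro g hg
    rw [hB, Finset.mem_filter] at hg
    have := news_card_le m n k g hm hg.2.1 hg.2.2
    rw [Finset.mem_range]; omega
  rw [Finset.card_eq_sum_card_fiberwise hmem]
  apply Finset.sum_le_sum
  intro j _
  exact fiber_bound m n k j hm

lemma sum_bound (M k : ℕ) (x : ℝ) (hx0 : 0 ≤ x) (hx1 : x < 1) (hkM : k ≤ M + 1) :
    ∑ j ∈ Finset.range k, (M.choose j : ℝ) * x ^ (M - j) ≤ ((1 - x)⁻¹) ^ (k - 1) := by
  have h1x : (0:ℝ) < 1 - x := by linarith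
  have key : (1 - x) ^ (k - 1) * ∑ j ∈ Finset.range k, (M.choose j : ℝ) * x ^ (M - j) ≤ 1 := by
    rw [Finset.mul_sum]
    have step1 : ∀ j ∈ Finset.range k,
        (1 - x) ^ (k - 1) * ((M.choose j : ℝ) * x ^ (M - j))
          ≤ (M.choose j : ℝ) * (1 - x) ^ j * x ^ (M - j) := by
      intro j hj
      rw [Finset.mem_range] at hj
      have hpow : (1 - x) ^ (k - 1) ≤ (1 - x) ^ j :=
        pow_le_pow_of_le_one h1x.le (by linarith) (by omega)
      have hnn : (0:ℝ) ≤ (M.choose j : ℝ) * x ^ (M - j) :=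
        mul_nonneg (Nat.cast_nonneg _) (pow_nonneg hx0 _)
      calc (1 - x) ^ (k - 1) * ((M.choose j : ℝ) * x ^ (M - j))
          ≤ (1 - x) ^ j * ((M.choose j : ℝ) * x ^ (M - j)) :=
            mul_le_mul_of_nonneg_right hpow hnn
        _ = (M.choose j : ℝ) * (1 - x) ^ j * x ^ (M - j) := by ring
    refine le_trans (Finset.sum_le_sum step1) ?_
    have step2 : ∑ j ∈ Finset.range k, (M.choose j : ℝ) * (1 - x) ^ j * x ^ (M - j)
        ≤ ∑ j ∈ Finset.range (M + 1), (M.choose j : ℝ) * (1 - x) ^ j * x ^ (M - j) := by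
      apply Finset.sum_le_sum_of_subset_of_nonneg (Finset.range_subset_range.2 hkM)
      intro j _ _
      exact mul_nonneg (mul_nonneg (Nat.cast_nonneg _) (pow_nonneg h1x.le _))
        (pow_nonneg hx0 _)
    refine le_trans step2 ?_
    have hbin := add_pow (1 - x) x M
    have : ∑ j ∈ Finset.range (M + 1), (M.choose j : ℝ) * (1 - x) ^ j * x ^ (M - j)
        = ((1 - x) + x) ^ M := by
      rw [hbin]
      apply Finset.sum_congr rfl
      intro j _
      ring
    rw [this]
    simp
  have h2 : (0:ℝ) < (1 - x) ^ (k - 1) := pow_pos h1x _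
  rw [inv_pow]
  calc ∑ j ∈ Finset.range k, (M.choose j : ℝ) * x ^ (M - j)
      = ((1 - x) ^ (k - 1))⁻¹ * ((1 - x) ^ (k - 1) *
          ∑ j ∈ Finset.range k, (M.choose j : ℝ) * x ^ (M - j)) := by
        field_simp
    _ ≤ ((1 - x) ^ (k - 1))⁻¹ * 1 := mul_le_mul_of_nonneg_left key (inv_nonneg.2 h2.le)
    _ = ((1 - x) ^ (k - 1))⁻¹ := mul_one _

lemma anal (m n k : ℕ) (ε θ : ℝ) (hm1 : 1 ≤ m) (hk1 : 1 ≤ k) (hn : 2 ≤ n)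
    (hε0 : 0 < ε) (hε1 : ε < 1) (hθ : 0 < θ)
    (hkle : (k : ℝ) ≤ (m : ℝ) * (1 - ε))
    (hy : (m : ℝ) * (1 - ε) * Real.exp θ < (n : ℝ) - 1) :
    ((∑ j ∈ Finset.range k, (m - 1).choose j * ((n - 1) ^ j * (k - 1) ^ (m - 1 - j)) : ℕ) : ℝ) *
      (((n : ℝ) - 1)⁻¹) ^ (m - 1)
    ≤ Real.exp (-θ * m * ε) /
        (1 - (m : ℝ) * Real.exp θ * (1 - ε) / ((n : ℝ) - 1)) ^ ((m : ℝ) * (1 - ε)) := by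
  have hNr : (1:ℝ) ≤ (n : ℝ) - 1 := by
    have : (2:ℝ) ≤ (n:ℝ) := by exact_mod_cast hn
    linarith
  have hNr0 : (0:ℝ) < (n : ℝ) - 1 := by linarith
  set Nr : ℝ := (n : ℝ) - 1 with hNrdef
  have hcastn : ((n - 1 : ℕ) : ℝ) = Nr := by
    rw [hNrdef]; push_cast [Nat.cast_sub (by omega : 1 ≤ n)]; ring
  have hcastk : ((k - 1 : ℕ) : ℝ) = (k : ℝ) - 1 := by
    push_cast [Nat.cast_sub hk1]; ring
  have hkm : k < m := by
    have h1 : (k : ℝ) < (m : ℝ) := by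
      have : (m : ℝ) * (1 - ε) < (m : ℝ) * 1 := by
        apply mul_lt_mul_of_pos_left (by linarith) (by positivity)
      calc (k:ℝ) ≤ (m:ℝ)*(1-ε) := hkle
        _ < (m:ℝ)*1 := this
        _ = (m:ℝ) := mul_one _
    exact_mod_cast h1
  set c : ℝ := (k : ℝ) - 1 with hcdef
  have hc0 : 0 ≤ c := by
    have : (1:ℝ) ≤ (k:ℝ) := by exact_mod_cast hk1
    rw [hcdef]; linarith
  set x : ℝ := c * Real.exp θ / Nr with hxdef
  set y : ℝ := (m : ℝ) * Real.exp θ * (1 - ε) / Nr with hydef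
  have hexp : (0:ℝ) < Real.exp θ := Real.exp_pos θ
  have hx0 : 0 ≤ x := by rw [hxdef]; positivity
  have hxy : x ≤ y := by
    rw [hxdef, hydef]
    apply (div_le_div_iff_of_pos_right hNr0).2
    have h1 : c ≤ (m:ℝ) * (1 - ε) := by
      have : (1:ℝ) ≤ (k:ℝ) := by exact_mod_cast hk1
      rw [hcdef]; linarith
    calc c * Real.exp θ ≤ ((m:ℝ) * (1 - ε)) * Real.exp θ :=
          mul_le_mul_of_nonneg_right h1 hexp.le
      _ = (m:ℝ) * Real.exp θ * (1 - ε) := by ring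
  have hy1 : y < 1 := by
    rw [hydef, div_lt_one hNr0]
    calc (m:ℝ) * Real.exp θ * (1 - ε) = (m:ℝ) * (1 - ε) * Real.exp θ := by ring
      _ < Nr := hy
  have hx1 : x < 1 := lt_of_le_of_lt hxy hy1
  have h1x : (0:ℝ) < 1 - x := by linarith
  have h1y : (0:ℝ) < 1 - y := by linarith
  -- rewrite LHS
  have hsum : ((∑ j ∈ Finset.range k,
        (m - 1).choose j * ((n - 1) ^ j * (k - 1) ^ (m - 1 - j)) : ℕ) : ℝ)
      = ∑ j ∈ Finset.range k, ((m - 1).choose j : ℝ) * (Nr ^ j * c ^ (m - 1 - j)) := by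
    rw [Nat.cast_sum]
    apply Finset.sum_congr rfl
    intro j _
    push_cast [Nat.cast_sub (show 1 ≤ n by omega), Nat.cast_sub hk1]
    ring
  have hLHS : ((∑ j ∈ Finset.range k,
        (m - 1).choose j * ((n - 1) ^ j * (k - 1) ^ (m - 1 - j)) : ℕ) : ℝ) * (Nr⁻¹) ^ (m - 1)
      = ∑ j ∈ Finset.range k, ((m - 1).choose j : ℝ) * (c / Nr) ^ (m - 1 - j) := by
    rw [hsum, Finset.sum_mul]
    apply Finset.sum_congr rfl
    intro j hj
    have hj' : j < k := Finset.mem_range.1 hj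
    have key : ∀ d e : ℕ, d + e = m - 1 →
        Nr ^ e * c ^ d * (Nr⁻¹) ^ (m - 1) = (c / Nr) ^ d := by
      intro d e hde
      rw [← hde, pow_add, div_pow]
      field_simp
      rw [one_div, inv_pow, inv_pow]
      have h1 : Nr ^ e ≠ 0 := pow_ne_zero _ hNr0.ne'
      have h2 : Nr ^ d ≠ 0 := pow_ne_zero _ hNr0.ne'
      calc Nr ^ e * c ^ d * (Nr ^ d)⁻¹ * (Nr ^ e)⁻¹ * Nr ^ d
          = c ^ d * (Nr ^ e * (Nr ^ e)⁻¹) * (Nr ^ d * (Nr ^ d)⁻¹) := by ring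
        _ = c ^ d := by rw [mul_inv_cancel₀ h1, mul_inv_cancel₀ h2, mul_one, mul_one]
    have := key (m - 1 - j) j (by omega)
    calc ((m - 1).choose j : ℝ) * (Nr ^ j * c ^ (m - 1 - j)) * Nr⁻¹ ^ (m - 1)
        = ((m - 1).choose j : ℝ) * (Nr ^ j * c ^ (m - 1 - j) * Nr⁻¹ ^ (m - 1)) := by ring
      _ = ((m - 1).choose j : ℝ) * (c / Nr) ^ (m - 1 - j) := by rw [this]
  set E : ℝ := Real.exp (-θ) with hEdef
  have he0 : (0:ℝ) ≤ E := (Real.exp_pos _).le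
  have he1 : E ≤ 1 := by
    rw [hEdef, Real.exp_le_one_iff]; linarith
  have hterm2 : ∀ j ∈ Finset.range k, ((m - 1).choose j : ℝ) * (c / Nr) ^ (m - 1 - j)
      ≤ E ^ (m - k) * (((m - 1).choose j : ℝ) * x ^ (m - 1 - j)) := by
    intro j hj
    have hj' : j < k := Finset.mem_range.1 hj
    have hcn : c / Nr = x * E := by
      rw [hxdef, hEdef, Real.exp_neg]
      field_simp
    rw [hcn, mul_pow]
    have hd : m - k ≤ m - 1 - j := by omega
    have hp : E ^ (m - 1 - j) ≤ E ^ (m - k) := pow_le_pow_of_le_one he0 he1 hd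
    have hnn : (0:ℝ) ≤ ((m - 1).choose j : ℝ) * x ^ (m - 1 - j) :=
      mul_nonneg (Nat.cast_nonneg _) (pow_nonneg hx0 _)
    calc ((m - 1).choose j : ℝ) * (x ^ (m - 1 - j) * E ^ (m - 1 - j))
        = E ^ (m - 1 - j) * (((m - 1).choose j : ℝ) * x ^ (m - 1 - j)) := by ring
      _ ≤ E ^ (m - k) * (((m - 1).choose j : ℝ) * x ^ (m - 1 - j)) :=
          mul_le_mul_of_nonneg_right hp hnn
  have hsb := sum_bound (m - 1) k x hx0 hx1 (by omega)
  have hE : E ^ (m - k) ≤ Real.exp (-θ * m * ε) := by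
    rw [hEdef, ← Real.exp_nat_mul]
    apply Real.exp_le_exp.2
    have hcast : ((m - k : ℕ) : ℝ) = (m : ℝ) - (k : ℝ) := by
      push_cast [Nat.cast_sub (le_of_lt hkm)]; ring
    rw [hcast]
    have : ε * (m:ℝ) ≤ (m:ℝ) - (k:ℝ) := by nlinarith
    nlinarith
  have hpowxy : ((1 - x)⁻¹) ^ (k - 1) ≤ ((1 - y)⁻¹) ^ (k - 1) := by
    apply pow_le_pow_left₀ (by positivity)
    exact inv_anti₀ h1y (by linarith)
  have hrpow : ((1 - y)⁻¹) ^ (k - 1) ≤ (1 - y) ^ (-((m : ℝ) * (1 - ε))) := by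
    have e1 : ((1 - y)⁻¹) ^ (k - 1) = (1 - y) ^ (-(((k - 1 : ℕ)) : ℝ)) := by
      rw [Real.rpow_neg h1y.le, Real.rpow_natCast, inv_pow]
    rw [e1]
    apply Real.rpow_le_rpow_of_exponent_ge h1y (by linarith)
    rw [hcastk]
    linarith
  have hfinal : Real.exp (-θ * m * ε) * ((1 - y) ^ (-((m : ℝ) * (1 - ε))))
      = Real.exp (-θ * m * ε) /
        (1 - (m : ℝ) * Real.exp θ * (1 - ε) / Nr) ^ ((m : ℝ) * (1 - ε)) := by
    rw [Real.rpow_neg h1y.le, div_eq_mul_inv, hydef]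
  calc ((∑ j ∈ Finset.range k,
        (m - 1).choose j * ((n - 1) ^ j * (k - 1) ^ (m - 1 - j)) : ℕ) : ℝ) * (Nr⁻¹) ^ (m - 1)
      = ∑ j ∈ Finset.range k, ((m - 1).choose j : ℝ) * (c / Nr) ^ (m - 1 - j) := hLHS
    _ ≤ ∑ j ∈ Finset.range k,
          E ^ (m - k) * (((m - 1).choose j : ℝ) * x ^ (m - 1 - j)) :=
        Finset.sum_le_sum hterm2
    _ = E ^ (m - k) * ∑ j ∈ Finset.range k, ((m - 1).choose j : ℝ) * x ^ ((m - 1) - j) := by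
        rw [← Finset.mul_sum]
    _ ≤ E ^ (m - k) * ((1 - x)⁻¹) ^ (k - 1) :=
        mul_le_mul_of_nonneg_left hsb (pow_nonneg he0 _)
    _ ≤ Real.exp (-θ * m * ε) * ((1 - y)⁻¹) ^ (k - 1) := by
        apply mul_le_mul hE hpowxy (by positivity) (Real.exp_pos _).le
    _ ≤ Real.exp (-θ * m * ε) * (1 - y) ^ (-((m : ℝ) * (1 - ε))) :=
        mul_le_mul_of_nonneg_left hrpow (Real.exp_pos _).le
    _ = _ := hfinal

open MeasureTheory Filter Set Real Finset ENNReal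

/-- Range deviation bound for the simple random walk on `C_n`:
`P(R_m ≤ m(1-ε)) ≤ e^{-θmε} / (1 - m e^θ (1-ε)/(n-1))^{m(1-ε)}`. -/
theorem stmt_11
    {Ω : Type*} [MeasurableSpace Ω] (P : Measure Ω) [IsProbabilityMeasure P]
    (n : ℕ) (hn : 2 ≤ n)
    (S : ℕ → Ω → ℕ) (hSm : ∀ i, Measurable (S i))
    (hlaw : ∀ m : ℕ, ∀ f : ℕ → ℕ,
      P {ω | ∀ i ≤ m, S i ω = f i} =
        if f 0 = 0 ∧ (∀ i ≤ m, f i < n) ∧ (∀ i < m, f (i + 1) ≠ f i)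
        then (((n : ℝ≥0∞) - 1)⁻¹) ^ m else 0)
    (R : ℕ → Ω → ℕ)
    (hR : ∀ m ω, R m ω = ((Finset.range m).image (fun i => S i ω)).card)
    (ε θ : ℝ) (hε : ε ∈ Set.Ioo (0 : ℝ) 1) (hθ : 0 < θ)
    (m : ℕ) (hm : (m : ℝ) * (1 - ε) * Real.exp θ < (n : ℝ) - 1) :
    P {ω | (R m ω : ℝ) ≤ (m : ℝ) * (1 - ε)} ≤
      ENNReal.ofReal (Real.exp (-θ * m * ε) /
        (1 - (m : ℝ) * Real.exp θ * (1 - ε) / ((n : ℝ) - 1)) ^ ((m : ℝ) * (1 - ε))) := by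
  classical
  obtain ⟨hε0, hε1⟩ := hε
  rcases Nat.eq_zero_or_pos m with hm0 | hm1
  · subst hm0
    have hRHS : ENNReal.ofReal (Real.exp (-θ * (0:ℕ) * ε) /
        (1 - ((0:ℕ) : ℝ) * Real.exp θ * (1 - ε) / ((n : ℝ) - 1)) ^ (((0:ℕ) : ℝ) * (1 - ε)))
        = 1 := by
      norm_num
    rw [hRHS]
    exact prob_le_one
  -- m ≥ 1
  set k : ℕ := ⌊(m : ℝ) * (1 - ε)⌋₊ with hkdef
  have hmε : (0:ℝ) ≤ (m : ℝ) * (1 - ε) := mul_nonneg (Nat.cast_nonneg m) (by linarith)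
  have hkle : (k : ℝ) ≤ (m : ℝ) * (1 - ε) := Nat.floor_le hmε
  have hset : {ω | (R m ω : ℝ) ≤ (m : ℝ) * (1 - ε)} = {ω | R m ω ≤ k} := by
    ext ω
    simp only [Set.mem_setOf_eq, hkdef]
    exact (Nat.le_floor_iff hmε).symm
  rw [hset]
  rcases Nat.eq_zero_or_pos k with hk0 | hk1
  · have hempty : {ω | R m ω ≤ k} = ∅ := by
      ext ω
      simp only [Set.mem_setOf_eq, Set.mem_empty_iff_false, iff_false, not_le, hk0]
      rw [hR]
      apply Finset.card_pos.2
      exact ⟨S 0 ω, Finset.mem_image.2 ⟨0, Finset.mem_range.2 hm1, rfl⟩⟩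
    rw [hempty]
    simp
  -- main case
  set B := (Fintype.piFinset fun _ : Fin m => Finset.range n).filter
      (fun g => validP m n g ∧ (Finset.image g Finset.univ).card ≤ k) with hB
  set q : ℝ≥0∞ := (((n : ℝ≥0∞) - 1)⁻¹) ^ (m - 1) with hq
  set E : (Fin m → ℕ) → Set Ω := fun g => {ω | ∀ i : Fin m, S i.val ω = g i} with hE
  have hcover : {ω | R m ω ≤ k} ⊆ ⋃ g : Fin m → ℕ, ({ω | R m ω ≤ k} ∩ E g) := by
    intro ω hω
    exact Set.mem_iUnion.2 ⟨fun i => S i.val ω, hω, fun i => rfl⟩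
  have h1 : P {ω | R m ω ≤ k} ≤ ∑' g : Fin m → ℕ, P ({ω | R m ω ≤ k} ∩ E g) :=
    (measure_mono hcover).trans (measure_iUnion_le _)
  have hterm : ∀ g : Fin m → ℕ, P ({ω | R m ω ≤ k} ∩ E g) ≤ if g ∈ B then q else 0 := by
    intro g
    have hEset : E g = {ω | ∀ i ≤ m - 1, S i ω = extz m g i} := by
      ext ω
      simp only [hE, Set.mem_setOf_eq]
      constructor
      · intro h i hi
        have him : i < m := by omega
        rw [extz_lt m g i him]
        exact h ⟨i, him⟩
      · intro h i
        have := h i.val (by omega)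
        rw [extz_lt m g i.val i.isLt] at this
        simpa using this
    have hPE : P (E g) = if extz m g 0 = 0 ∧ (∀ i ≤ m - 1, extz m g i < n) ∧
        (∀ i < m - 1, extz m g (i + 1) ≠ extz m g i) then q else 0 := by
      rw [hEset, hlaw (m - 1) (extz m g), hq]
    by_cases hv : validP m n g
    · by_cases hb : (Finset.image g Finset.univ).card ≤ k
      · have hgB : g ∈ B := by
          rw [hB, Finset.mem_filter]
          refine ⟨?_, hv, hb⟩
          rw [Fintype.mem_piFinset]
          intro i
          rw [Finset.mem_range, ← extz_lt m g i.val i.isLt]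
          exact hv.2.1 i.val i.isLt
        rw [if_pos hgB]
        refine le_trans (measure_mono (Set.inter_subset_right)) ?_
        rw [hPE, if_pos]
        exact ⟨hv.1, fun i _ => hv.2.1 i (by omega), fun i hi => hv.2.2 i (by omega)⟩
      · have hemp : {ω | R m ω ≤ k} ∩ E g = ∅ := by
          ext ω
          simp only [Set.mem_inter_iff, Set.mem_setOf_eq, Set.mem_empty_iff_false, iff_false,
            not_and, hE]
          intro hRk hEg
          apply hb
          have : (Finset.range m).image (fun i => S i ω) = (Finset.range m).image (extz m g) := by
            apply Finset.image_congr
            intro i hi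
            rw [Finset.mem_coe, Finset.mem_range] at hi
            rw [extz_lt m g i hi]
            exact hEg ⟨i, hi⟩
          rw [hR, this, im_eq] at hRk
          exact hRk
        rw [hemp]
        simp
    · refine le_trans (measure_mono (Set.inter_subset_right)) ?_
      rw [hPE, if_neg]
      · exact zero_le
      · intro hc
        apply hv
        exact ⟨hc.1, fun i hi => hc.2.1 i (by omega), fun i hi => hc.2.2 i (by omega)⟩
  have h2 : ∑' g : Fin m → ℕ, P ({ω | R m ω ≤ k} ∩ E g) ≤ (B.card : ℝ≥0∞) * q := by
    refine le_trans (ENNReal.tsum_le_tsum hterm) ?_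
    rw [tsum_eq_sum (s := B) (fun g hg => if_neg hg)]
    rw [Finset.sum_congr rfl (fun g hg => if_pos hg), Finset.sum_const, nsmul_eq_mul]
  have h3 := count_bound m n k hm1 hk1
  set T : ℕ := ∑ j ∈ Finset.range k, (m - 1).choose j * ((n - 1) ^ j * (k - 1) ^ (m - 1 - j))
    with hT
  have h4 : (B.card : ℝ≥0∞) * q ≤ (T : ℝ≥0∞) * q :=
    mul_le_mul_left (Nat.cast_le.2 h3) q
  have hcastq : (T : ℝ≥0∞) * q =
      ENNReal.ofReal ((T : ℝ) * ((((n : ℝ) - 1))⁻¹) ^ (m - 1)) := by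
    have hsub : ((n : ℝ≥0∞) - 1) = ((n - 1 : ℕ) : ℝ≥0∞) := by
      rw [ENNReal.natCast_sub]
      simp
    have hpos : (0 : ℝ) < ((n - 1 : ℕ) : ℝ) := by
      have : 1 ≤ n - 1 := by omega
      exact_mod_cast Nat.lt_of_lt_of_le Nat.zero_lt_one (by exact_mod_cast this)
    have hcast2 : ((n - 1 : ℕ) : ℝ) = (n : ℝ) - 1 := by
      push_cast [Nat.cast_sub (by omega : 1 ≤ n)]; ring
    rw [hq, hsub, ← hcast2]
    rw [ENNReal.ofReal_mul (by positivity), ENNReal.ofReal_pow (by positivity)]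
    rw [ENNReal.ofReal_inv_of_pos hpos]
    simp
  have h5 : ENNReal.ofReal ((T : ℝ) * ((((n : ℝ) - 1))⁻¹) ^ (m - 1)) ≤
      ENNReal.ofReal (Real.exp (-θ * m * ε) /
        (1 - (m : ℝ) * Real.exp θ * (1 - ε) / ((n : ℝ) - 1)) ^ ((m : ℝ) * (1 - ε))) := by
    apply ENNReal.ofReal_le_ofReal
    exact anal m n k ε θ hm1 hk1 hn hε0 hε1 hθ hkle hm
  exact le_trans h1 (le_trans h2 (le_trans h4 (le_of_eq hcastq |>.trans h5)))
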